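/- In the setup of the generalized Spencer complex C^{p,q}(g,W) with W ⊂ V of codimension one spanned complement ⟨ρ⟩, let C^{p,q}_⊥(g) ⊂ g^{p−1}⊗Λ^qV* be the subspace of cochains vanishing on Λ^qW. Then the map φ(c) := (−1)^q (ι_ρ c)|_{Λ^{q−1}W} is a linear isomorphism from C^{p,q}_⊥(g) onto C^{p,q−1}(g,W) commuting with the Spencer differentials. -/

import Mathlib

open Equiv Finset

namespace SpencerAux

/-- permutation sending `0 ↦ i`, `l.succ ↦ i.succAbove l`. -/
def finRot {n : ℕ} (i : Fin (n+1)) : Equiv.Perm (Fin (n+1)) :=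
  (finSuccEquiv n).trans (finSuccEquiv' i).symm

@[simp] lemma finRot_zero {n : ℕ} (i : Fin (n+1)) : finRot i 0 = i := by
  simp [finRot]

@[simp] lemma finRot_succ {n : ℕ} (i : Fin (n+1)) (l : Fin n) :
    finRot i l.succ = i.succAbove l := by
  simp [finRot]

variable {L : Type*} [LieRing L] [LieAlgebra ℝ L]
variable {V : Type*} [AddCommGroup V] [Module ℝ V]

/-- An alternating map vanishing on `W`-tuples and on tuples `(ρ, w₁, …)` vanishes. -/
theorem alt_eq_zero {q : ℕ} (W : Submodule ℝ V) (ρ : V)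
    (hcompl : IsCompl W (Submodule.span ℝ {ρ}))
    (d : AlternatingMap ℝ V L (Fin (q+1)))
    (h1 : ∀ w : Fin (q+1) → W, d (fun i => (w i : V)) = 0)
    (h2 : ∀ w : Fin q → W, d (Fin.cons ρ (fun l => (w l : V))) = 0) :
    d = 0 := by
  classical
  ext v
  set π : V →ₗ[ℝ] W := W.projectionOnto _ hcompl with hπ
  -- scalar components along ρ
  have hmem : ∀ i, ((Submodule.span ℝ {ρ}).projectionOnto W hcompl.symm (v i) : V)
      ∈ Submodule.span ℝ ({ρ} : Set V) := fun i => Subtype.coe_prop _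
  choose t ht using fun i => Submodule.mem_span_singleton.1 (hmem i)
  have hv : v = (fun i => t i • ρ) + (fun i => (π (v i) : V)) := by
    funext i
    have := Submodule.projection_add_projection_eq_self hcompl (v i)
    rw [Submodule.projection_apply, Submodule.projection_apply] at this
    rw [← this, ← ht i]
    simp [Pi.add_apply, hπ]
    abel
  have key : ∀ s : Finset (Fin (q+1)),
      d.toMultilinearMap (s.piecewise (fun i => t i • ρ) (fun i => (π (v i) : V))) = 0 := by
    intro s
    set u : Fin (q+1) → V := fun i => if i ∈ s then ρ else (π (v i) : V) with hu
    have hpw : s.piecewise (fun i => t i • ρ) (fun i => (π (v i) : V))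
        = s.piecewise (fun i => t i • u i) u := by
      ext i
      by_cases h : i ∈ s <;> simp [Finset.piecewise, h, hu]
    rw [hpw, MultilinearMap.map_piecewise_smul]
    suffices h : d u = 0 by
      show (∏ i ∈ s, t i) • d u = 0
      rw [h, smul_zero]
    by_cases hs0 : s = ∅
    · have : u = fun i => ((π (v i) : W) : V) := by
        funext i; simp [hu, hs0]
      rw [this]
      exact h1 (fun i => π (v i))
    · by_cases hs1 : ∃ i, s = {i}
      · obtain ⟨i, rfl⟩ := hs1
        have hperm := d.map_perm u (finRot i)
        have hcomp : u ∘ finRot i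
            = Fin.cons ρ (fun l => ((π (v (i.succAbove l)) : W) : V)) := by
          funext k
          refine Fin.cases ?_ (fun l => ?_) k
          · simp [hu]
          · have : i.succAbove l ≠ i := Fin.succAbove_ne i l
            simp [hu, this]
        rw [hcomp, h2 (fun l => π (v (i.succAbove l)))] at hperm
        rcases Int.units_eq_one_or (Equiv.Perm.sign (finRot i)) with h | h <;>
          rw [h] at hperm <;> simpa using hperm.symm
      · -- s has at least two elements
        have hcard : 1 < s.card := by
          rcases Nat.lt_or_ge s.card 2 with h | h
          · interval_cases h' : s.card
            · exact absurd (Finset.card_eq_zero.1 h') hs0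
            · obtain ⟨i, hi⟩ := Finset.card_eq_one.1 h'
              exact absurd ⟨i, hi⟩ hs1
          · omega
        obtain ⟨a, ha, b, hb, hab⟩ := Finset.one_lt_card.1 hcard
        exact d.map_eq_zero_of_eq u (by simp [hu, ha, hb]) hab
  calc d v = d.toMultilinearMap ((fun i => t i • ρ) + fun i => (π (v i) : V)) := by
        rw [← hv]; rfl
    _ = ∑ s : Finset (Fin (q+1)),
          d.toMultilinearMap (s.piecewise (fun i => t i • ρ) (fun i => (π (v i) : V))) :=
        d.toMultilinearMap.map_add_univ _ _
    _ = 0 := Finset.sum_eq_zero fun s _ => key s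



theorem exists_preimage {q : ℕ} (W : Submodule ℝ V) (ρ : V) (hρ : ρ ≠ 0)
    (hcompl : IsCompl W (Submodule.span ℝ {ρ}))
    (b : AlternatingMap ℝ W L (Fin q)) :
    ∃ c : AlternatingMap ℝ V L (Fin (q+1)),
      (∀ w : Fin (q+1) → W, c (fun i => (w i : V)) = 0) ∧
      ∀ w : Fin q → W, c (Fin.cons ρ (fun l => (w l : V)))
        = ((-1 : ℝ) ^ (q+1)) • b w := by
  classical
  set π : V →ₗ[ℝ] W := W.linearProjOfIsCompl _ hcompl with hπ
  set lam : V →ₗ[ℝ] ℝ :=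
    (LinearEquiv.coord ℝ V ρ hρ).toLinearMap ∘ₗ
      (Submodule.span ℝ {ρ}).linearProjOfIsCompl W hcompl.symm with hlam
  have hlamρ : lam ρ = 1 := by
    have h1 : (Submodule.span ℝ {ρ}).linearProjOfIsCompl W hcompl.symm ρ
        = ⟨ρ, Submodule.mem_span_singleton_self ρ⟩ :=
      Submodule.linearProjOfIsCompl_apply_left hcompl.symm
        ⟨ρ, Submodule.mem_span_singleton_self ρ⟩
    simp [hlam, h1, LinearEquiv.coord_self]
  have hlamW : ∀ x : W, lam (x : V) = 0 := by
    intro x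
    have h1 : (Submodule.span ℝ {ρ}).linearProjOfIsCompl W hcompl.symm (x : V) = 0 :=
      Submodule.projectionOnto_apply_of_mem_right hcompl.symm x.2
    simp [hlam, h1]
  have hπW : ∀ x : W, π (x : V) = x := fun x =>
    Submodule.linearProjOfIsCompl_apply_left hcompl x
  -- the multilinear map  v ↦ lam (v 0) • b (π ∘ tail v)
  set F : MultilinearMap ℝ (fun _ : Fin q => V) L :=
    b.toMultilinearMap.compLinearMap (fun _ => π) with hF
  set G : MultilinearMap ℝ (fun _ : Fin (q+1) => V) L :=
    (lam.smulRight F).uncurryLeft with hG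
  have hGapp : ∀ v : Fin (q+1) → V,
      G v = lam (v 0) • b (fun l => π (v l.succ)) := by
    intro v; rfl
  set c0 : AlternatingMap ℝ V L (Fin (q+1)) := MultilinearMap.alternatization G with hc0
  have hc0app : ∀ v : Fin (q+1) → V,
      c0 v = ∑ σ : Equiv.Perm (Fin (q+1)),
        Equiv.Perm.sign σ • (lam (v (σ 0)) • b (fun l => π (v (σ l.succ)))) := by
    intro v
    rw [hc0, MultilinearMap.alternatization_apply]
    refine Finset.sum_congr rfl fun σ _ => ?_
    rw [MultilinearMap.domDomCongr_apply, hGapp]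
  refine ⟨((-1 : ℝ)^(q+1) * ((q.factorial : ℝ)⁻¹)) • c0, ?_, ?_⟩
  · intro w
    rw [AlternatingMap.smul_apply, hc0app]
    have : ∀ σ : Equiv.Perm (Fin (q+1)),
        Equiv.Perm.sign σ •
          (lam ((fun i => (w i : V)) (σ 0)) • b (fun l => π ((w (σ l.succ) : V)))) = 0 := by
      intro σ; rw [show lam ((w (σ 0) : V)) = 0 from hlamW _, zero_smul, smul_zero]
    rw [Finset.sum_congr rfl fun σ _ => this σ]
    simp
  · intro w
    rw [AlternatingMap.smul_apply, hc0app]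
    have hsum : (∑ σ : Equiv.Perm (Fin (q+1)),
        Equiv.Perm.sign σ •
          (lam ((Fin.cons ρ (fun l => (w l : V)) : Fin (q+1) → V) (σ 0)) •
            b (fun l => π ((Fin.cons ρ (fun l => (w l : V)) : Fin (q+1) → V) (σ l.succ)))))
        = (q.factorial : ℕ) • b w := by
      rw [← Equiv.sum_comp (Equiv.Perm.decomposeFin.symm :
            Fin (q+1) × Equiv.Perm (Fin q) ≃ Equiv.Perm (Fin (q+1)))]
      rw [Fintype.sum_prod_type]
      rw [Fin.sum_univ_succ]
      have hrest : ∀ p : Fin q, ∑ σ : Equiv.Perm (Fin q),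
          (Equiv.Perm.sign (Equiv.Perm.decomposeFin.symm (p.succ, σ)) •
            (lam ((Fin.cons ρ (fun l => (w l : V)) : Fin (q+1) → V)
              (Equiv.Perm.decomposeFin.symm (p.succ, σ) 0)) •
            b (fun l => π ((Fin.cons ρ (fun l => (w l : V)) : Fin (q+1) → V)
              (Equiv.Perm.decomposeFin.symm (p.succ, σ) l.succ))))) = 0 := by
        intro p
        refine Finset.sum_eq_zero fun σ _ => ?_
        rw [Equiv.Perm.decomposeFin_symm_apply_zero, Fin.cons_succ,
          show lam ((w p : V)) = 0 from hlamW _, zero_smul, smul_zero]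
      rw [Finset.sum_congr rfl fun p _ => hrest p, Finset.sum_const_zero, add_zero]
      have hmain : ∀ σ : Equiv.Perm (Fin q),
          (Equiv.Perm.sign (Equiv.Perm.decomposeFin.symm ((0 : Fin (q+1)), σ)) •
            (lam ((Fin.cons ρ (fun l => (w l : V)) : Fin (q+1) → V)
              (Equiv.Perm.decomposeFin.symm ((0 : Fin (q+1)), σ) 0)) •
            b (fun l => π ((Fin.cons ρ (fun l => (w l : V)) : Fin (q+1) → V)
              (Equiv.Perm.decomposeFin.symm ((0 : Fin (q+1)), σ) l.succ))))) = b w := by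
        intro σ
        have happ : ∀ l : Fin q,
            (Equiv.Perm.decomposeFin.symm ((0 : Fin (q+1)), σ)) l.succ = (σ l).succ := by
          intro l
          rw [Equiv.Perm.decomposeFin_symm_apply_succ]
          simp
        have hargs : (fun l => π ((Fin.cons ρ (fun l => (w l : V)) : Fin (q+1) → V)
            ((Equiv.Perm.decomposeFin.symm ((0 : Fin (q+1)), σ)) l.succ)))
            = fun l => w (σ l) := by
          funext l
          rw [happ l, Fin.cons_succ, hπW]
        rw [Equiv.Perm.decomposeFin_symm_apply_zero, Fin.cons_zero, hlamρ, one_smul,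
          hargs, Equiv.Perm.decomposeFin.symm_sign, if_pos rfl, one_mul]
        have := b.map_perm w σ
        rw [show (fun l => w (σ l)) = w ∘ σ from rfl, this, smul_smul,
          Int.units_mul_self, one_smul]
      rw [Finset.sum_congr rfl fun σ _ => hmain σ, Finset.sum_const]
      congr 1
      simp [Fintype.card_perm]
    rw [hsum]
    rw [← Nat.cast_smul_eq_nsmul ℝ, smul_smul]
    congr 1
    have hq : (q.factorial : ℝ) ≠ 0 := Nat.cast_ne_zero.2 q.factorial_ne_zero
    field_simp

end SpencerAux

/-- The (generalized) Spencer operator on plain cochains. -/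
noncomputable def spencerD {L : Type*} [LieRing L] [LieAlgebra ℝ L]
    {W : Type*} [AddCommGroup W] [Module ℝ W] (ιL : W →ₗ[ℝ] L)
    (q : ℕ) (c : (Fin q → W) → L) : (Fin (q + 1) → W) → L := fun w =>
  ∑ i : Fin (q + 1), ((-1 : ℝ) ^ (i : ℕ)) • ⁅c (fun l => w (i.succAbove l)), ιL (w i)⁆

/-- Let `W ⊂ V` have codimension one, with complement spanned by
`ρ ≠ 0`, and let `C^{p,q}_⊥(g) ⊂ g^{p−1} ⊗ ΛᵠV*` be the alternating cochains vanishing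
on `ΛᵠW`.  Then `φ(c) := (−1)ᵠ (ι_ρ c)|_{Λ^{q−1}W}` is a linear bijection from
`C^{p,q}_⊥(g)` onto `C^{p,q−1}(g, W)` commuting with the Spencer differentials. -/
theorem contraction_with_rho_iso_and_chain_map
    {L : Type*} [LieRing L] [LieAlgebra ℝ L]
    {V : Type*} [AddCommGroup V] [Module ℝ V] (j : V →ₗ[ℝ] L)
    (habel : ∀ x y : V, ⁅j x, j y⁆ = 0)
    (W : Submodule ℝ V) (ρ : V) (hρ : ρ ≠ 0)
    (hcompl : IsCompl W (Submodule.span ℝ {ρ})) (q : ℕ) :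
    Function.Bijective
      (fun c : {c : AlternatingMap ℝ V L (Fin (q + 1)) //
          ∀ w : Fin (q + 1) → W, c (fun i => (w i : V)) = 0} =>
        ((-1 : ℝ) ^ (q + 1)) • ((c.1.curryLeft ρ).compLinearMap W.subtype)) ∧
    ∀ c : {c : AlternatingMap ℝ V L (Fin (q + 1)) //
        ∀ w : Fin (q + 1) → W, c (fun i => (w i : V)) = 0},
      (fun w : Fin (q + 1) → W =>
          ((-1 : ℝ) ^ (q + 2)) •
            spencerD j (q + 1) (⇑c.1) (Fin.cons ρ (fun i => (w i : V))))
        = spencerD (j ∘ₗ W.subtype) q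
            (fun w : Fin q → W =>
              ((-1 : ℝ) ^ (q + 1)) • c.1 (Fin.cons ρ (fun i => (w i : V)))) := by
  classical
  have hkey : ∀ x y : L, ((-1 : ℝ) ^ (q + 1)) • x = ((-1 : ℝ) ^ (q + 1)) • y → x = y := by
    intro x y hxy
    have h2 := congrArg (fun z => ((-1 : ℝ) ^ (q + 1)) • z) hxy
    simpa [smul_smul, ← pow_add, Even.neg_one_pow (⟨q + 1, by ring⟩ : Even ((q + 1) + (q + 1)))]
      using h2
  constructor
  · constructor
    · -- injectivity
      rintro ⟨c, hc⟩ ⟨c', hc'⟩ h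
      simp only at h
      have h3 : ∀ w : Fin q → W,
          c (Fin.cons ρ (fun l => (w l : V))) = c' (Fin.cons ρ (fun l => (w l : V))) := by
        intro w
        have h4 := AlternatingMap.congr_fun h w
        simp only [AlternatingMap.smul_apply, AlternatingMap.compLinearMap_apply] at h4
        exact hkey _ _ h4
      have hsub : c - c' = 0 :=
        SpencerAux.alt_eq_zero W ρ hcompl (c - c')
          (fun w => by simp [hc w, hc' w])
          (fun w => by simp [h3 w])
      exact Subtype.ext (sub_eq_zero.1 hsub)
    · -- surjectivity
      intro b
      obtain ⟨c, hcW, hcρ⟩ := SpencerAux.exists_preimage W ρ hρ hcompl b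
      refine ⟨⟨c, hcW⟩, ?_⟩
      ext w
      simp only [AlternatingMap.smul_apply, AlternatingMap.compLinearMap_apply]
      have hcl : ((c.curryLeft ρ) fun i => W.subtype (w i))
          = c (Fin.cons ρ (fun l => (w l : V))) := rfl
      rw [hcl, hcρ w, smul_smul, ← pow_add,
        Even.neg_one_pow (⟨q + 1, by ring⟩ : Even ((q + 1) + (q + 1))), one_smul]
  · -- chain map property
    intro c
    funext w
    simp only [spencerD]
    rw [Fin.sum_univ_succ]
    have h0 : (fun l : Fin (q + 1) =>
        (Fin.cons ρ (fun i => (w i : V)) : Fin (q + 2) → V) ((0 : Fin (q + 2)).succAbove l))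
        = fun l => ((w l : W) : V) := by
      funext l
      rw [show (0 : Fin (q + 2)).succAbove l = l.succ from rfl, Fin.cons_succ]
    rw [h0, c.2 w, zero_lie, smul_zero, zero_add]
    have harg : ∀ i : Fin (q + 1),
        (fun l : Fin (q + 1) =>
          (Fin.cons ρ (fun i => (w i : V)) : Fin (q + 2) → V) (i.succ.succAbove l))
        = Fin.cons ρ (fun l => (w (i.succAbove l) : V)) := by
      intro i
      funext l
      refine Fin.cases ?_ (fun l' => ?_) l
      · rw [Fin.succ_succAbove_zero, Fin.cons_zero, Fin.cons_zero]
      · rw [Fin.succ_succAbove_succ, Fin.cons_succ, Fin.cons_succ]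
    rw [Finset.smul_sum]
    refine Finset.sum_congr rfl fun i _ => ?_
    rw [harg i, Fin.cons_succ]
    rw [smul_lie, smul_smul, smul_smul]
    congr 1
    · show ((-1 : ℝ) ^ (q + 2)) * ((-1 : ℝ) ^ ((i.succ : Fin (q+2)) : ℕ))
        = ((-1 : ℝ) ^ ((i : Fin (q+1)) : ℕ)) * ((-1 : ℝ) ^ (q + 1))
      rw [Fin.val_succ, ← pow_add, ← pow_add]
      have hexp : q + 2 + ((i : ℕ) + 1) = ((i : ℕ) + (q + 1)) + 2 := by ring
      rw [hexp, pow_add]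
      norm_num
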